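/- Let S_c(p,q) denote the 3×3 matrix with rows (1 − c²q²/2, −c²pq/2, −cq), (−c²pq/2, 1 − c²p²/2, −cp), (cq, cp, 1 − c²(p²+q²)/2). For c = (c₁,…,c_m) and vectors p, q ∈ ℝᵐ, set Π_c(p,q) := S_{c₁}(p₁,q₁)⋯S_{c_m}(p_m,q_m). Then the upper-left 2×2 submatrix of Π_c(p,q) equals Id − (1/2)·[[ (c·q)², (c·p)(c·q) − Δ_c(p,q) ], [ (c·p)(c·q) + Δ_c(p,q), (c·p)² ]] + O(4), where c·p = Σ c_i p_i, c·q = Σ c_i q_i, and Δ_c(p,q) := Σ_{1≤i<j≤m} c_i c_j (p_i q_j − p_j q_i) (and Δ_c := 0 when m = 1); here O(4) denotes terms of total degree ≥ 4 in (p,q). -/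

import Mathlib

open Asymptotics

/-- The matrix `S_c(p,q)`. -/
noncomputable def Smat (c p q : ℝ) : Matrix (Fin 3) (Fin 3) ℝ :=
  !![1 - c ^ 2 * q ^ 2 / 2, -(c ^ 2 * p * q) / 2, -(c * q);
     -(c ^ 2 * p * q) / 2, 1 - c ^ 2 * p ^ 2 / 2, -(c * p);
     c * q, c * p, 1 - c ^ 2 * (p ^ 2 + q ^ 2) / 2]


section BigO

variable {E : Type*} [NormedAddCommGroup E]

lemma omul {f g : E → ℝ} {a b : ℕ}
    (hf : f =O[nhds (0:E)] fun x => ‖x‖ ^ a) (hg : g =O[nhds (0:E)] fun x => ‖x‖ ^ b) :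
    (fun x => f x * g x) =O[nhds (0:E)] fun x => ‖x‖ ^ (a + b) := by
  simpa [pow_add] using hf.mul hg

lemma opow_le {a b : ℕ} (h : a ≤ b) :
    (fun x : E => ‖x‖ ^ b) =O[nhds (0:E)] fun x => ‖x‖ ^ a := by
  rw [isBigO_iff]
  refine ⟨1, ?_⟩
  have h1 : ∀ᶠ x : E in nhds 0, ‖x‖ ≤ 1 := by
    filter_upwards [Metric.closedBall_mem_nhds (0:E) one_pos] with x hx
    simpa [mem_closedBall_zero_iff] using hx
  filter_upwards [h1] with x hx
  simp only [norm_pow, norm_norm, one_mul]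
  exact pow_le_pow_of_le_one (norm_nonneg x) hx h

lemma omono {f : E → ℝ} {a b : ℕ} (hf : f =O[nhds (0:E)] fun x => ‖x‖ ^ b) (h : a ≤ b) :
    f =O[nhds (0:E)] fun x => ‖x‖ ^ a :=
  hf.trans (opow_le h)

lemma oconst (r : ℝ) : (fun _ : E => r) =O[nhds (0:E)] fun x : E => ‖x‖ ^ 0 := by
  simpa [pow_zero] using isBigO_const_const r (one_ne_zero (α := ℝ)) (nhds (0:E))

end BigO

variable {m : ℕ}

local notation "V" => (Fin m → ℝ) × (Fin m → ℝ)

lemma ofst (l : Fin m) : (fun x : V => x.1 l) =O[nhds 0] fun x : V => ‖x‖ ^ 1 := by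
  refine Asymptotics.isBigO_of_le _ fun x => ?_
  simp only [pow_one, norm_norm]
  exact (norm_le_pi_norm x.1 l).trans (norm_fst_le x)

lemma osnd (l : Fin m) : (fun x : V => x.2 l) =O[nhds 0] fun x : V => ‖x‖ ^ 1 := by
  refine Asymptotics.isBigO_of_le _ fun x => ?_
  simp only [pow_one, norm_norm]
  exact (norm_le_pi_norm x.2 l).trans (norm_snd_le x)

noncomputable def Pf (c : Fin m → ℝ) (n : ℕ) (x : V) : ℝ :=
  ∑ l : Fin m, if l.val < n then c l * x.1 l else 0

noncomputable def Qf (c : Fin m → ℝ) (n : ℕ) (x : V) : ℝ :=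
  ∑ l : Fin m, if l.val < n then c l * x.2 l else 0

noncomputable def Df (c : Fin m → ℝ) (n : ℕ) (x : V) : ℝ :=
  ∑ a : Fin m, ∑ b ∈ Finset.Ioi a,
    if b.val < n then c a * c b * (x.1 a * x.2 b - x.1 b * x.2 a) else 0

lemma oPf (c : Fin m → ℝ) (n : ℕ) :
    (fun x : V => Pf c n x) =O[nhds 0] fun x : V => ‖x‖ ^ 1 := by
  refine Asymptotics.IsBigO.fun_sum fun l _ => ?_
  by_cases hl : l.val < n
  · simp only [if_pos hl]
    exact (ofst l).const_mul_left (c l)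
  · simp only [if_neg hl]
    exact isBigO_zero _ _

lemma oQf (c : Fin m → ℝ) (n : ℕ) :
    (fun x : V => Qf c n x) =O[nhds 0] fun x : V => ‖x‖ ^ 1 := by
  refine Asymptotics.IsBigO.fun_sum fun l _ => ?_
  by_cases hl : l.val < n
  · simp only [if_pos hl]
    exact (osnd l).const_mul_left (c l)
  · simp only [if_neg hl]
    exact isBigO_zero _ _

lemma oDf (c : Fin m → ℝ) (n : ℕ) :
    (fun x : V => Df c n x) =O[nhds 0] fun x : V => ‖x‖ ^ 2 := by
  refine Asymptotics.IsBigO.fun_sum fun a _ => Asymptotics.IsBigO.fun_sum fun b _ => ?_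
  by_cases hb : b.val < n
  · simp only [if_pos hb]
    exact ((omul (ofst a) (osnd b)).sub (omul (ofst b) (osnd a))).const_mul_left _
  · simp only [if_neg hb]
    exact isBigO_zero _ _

noncomputable def Mf (c : Fin m → ℝ) (n : ℕ) (x : V) : Matrix (Fin 3) (Fin 3) ℝ :=
  !![1 - Qf c n x ^ 2 / 2, -(Pf c n x * Qf c n x - Df c n x) / 2, -Qf c n x;
     -(Pf c n x * Qf c n x + Df c n x) / 2, 1 - Pf c n x ^ 2 / 2, -Pf c n x;
     Qf c n x, Pf c n x, 1 - (Pf c n x ^ 2 + Qf c n x ^ 2) / 2]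

noncomputable def Prodn (c : Fin m → ℝ) (n : ℕ) (x : V) : Matrix (Fin 3) (Fin 3) ℝ :=
  ((List.ofFn fun l : Fin m => Smat (c l) (x.1 l) (x.2 l)).take n).prod

lemma ite_succ_split (t : Fin m → ℝ) (n : ℕ) (h : n < m) (l : Fin m) :
    (if l.val < n + 1 then t l else 0)
      = (if l.val < n then t l else 0) + (if l = ⟨n, h⟩ then t l else 0) := by
  simp only [Fin.ext_iff]
  split_ifs <;> first | ring1 | (exfalso; omega)

lemma Pf_succ (c : Fin m → ℝ) (n : ℕ) (h : n < m) (x : V) :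
    Pf c (n + 1) x = Pf c n x + c ⟨n, h⟩ * x.1 ⟨n, h⟩ := by
  unfold Pf
  rw [Finset.sum_congr rfl fun l _ => ite_succ_split (fun l => c l * x.1 l) n h l,
    Finset.sum_add_distrib]
  simp

lemma Qf_succ (c : Fin m → ℝ) (n : ℕ) (h : n < m) (x : V) :
    Qf c (n + 1) x = Qf c n x + c ⟨n, h⟩ * x.2 ⟨n, h⟩ := by
  unfold Qf
  rw [Finset.sum_congr rfl fun l _ => ite_succ_split (fun l => c l * x.2 l) n h l,
    Finset.sum_add_distrib]
  simp

lemma Df_succ (c : Fin m → ℝ) (n : ℕ) (h : n < m) (x : V) :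
    Df c (n + 1) x = Df c n x
      + c ⟨n, h⟩ * (Pf c n x * x.2 ⟨n, h⟩ - Qf c n x * x.1 ⟨n, h⟩) := by
  unfold Df
  have step : ∀ a : Fin m,
      (∑ b ∈ Finset.Ioi a,
          if b.val < n + 1 then c a * c b * (x.1 a * x.2 b - x.1 b * x.2 a) else 0)
        = (∑ b ∈ Finset.Ioi a,
            if b.val < n then c a * c b * (x.1 a * x.2 b - x.1 b * x.2 a) else 0)
          + (if a.val < n
              then c a * c ⟨n, h⟩ * (x.1 a * x.2 ⟨n, h⟩ - x.1 ⟨n, h⟩ * x.2 a) else 0) := by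
    intro a
    rw [Finset.sum_congr rfl fun b _ =>
        ite_succ_split (fun b => c a * c b * (x.1 a * x.2 b - x.1 b * x.2 a)) n h b,
      Finset.sum_add_distrib]
    congr 1
    simp [Finset.mem_Ioi, Fin.lt_def]
  rw [Finset.sum_congr rfl fun a _ => step a, Finset.sum_add_distrib]
  congr 1
  have expand : c ⟨n, h⟩ * (Pf c n x * x.2 ⟨n, h⟩ - Qf c n x * x.1 ⟨n, h⟩)
      = ∑ a : Fin m, c ⟨n, h⟩ * ((if a.val < n then c a * x.1 a else 0) * x.2 ⟨n, h⟩
          - (if a.val < n then c a * x.2 a else 0) * x.1 ⟨n, h⟩) := by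
    unfold Pf Qf
    rw [Finset.sum_mul, Finset.sum_mul, ← Finset.sum_sub_distrib, Finset.mul_sum]
  rw [expand]
  exact Finset.sum_congr rfl fun a _ => by split_ifs <;> ring

lemma Prodn_zero (c : Fin m → ℝ) (x : V) : Prodn c 0 x = 1 := by simp [Prodn]

lemma Prodn_succ (c : Fin m → ℝ) (n : ℕ) (h : n < m) (x : V) :
    Prodn c (n + 1) x = Prodn c n x * Smat (c ⟨n, h⟩) (x.1 ⟨n, h⟩) (x.2 ⟨n, h⟩) := by
  unfold Prodn
  rw [List.take_succ]
  have h2 : (List.ofFn fun l : Fin m => Smat (c l) (x.1 l) (x.2 l))[n]?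
      = some (Smat (c ⟨n, h⟩) (x.1 ⟨n, h⟩) (x.2 ⟨n, h⟩)) := by
    rw [List.getElem?_eq_getElem (by simpa using h)]
    simp only [List.getElem_ofFn]
  rw [h2]
  simp

noncomputable def sdeg (k j : Fin 3) : ℕ := !![0, 0, 1; 0, 0, 1; 1, 1, 0] k j


lemma deg_le (k j : Fin 3) : (![4, 4, 3] : Fin 3 → ℕ) j ≤ ![4, 4, 3] k + sdeg k j := by
  fin_cases k <;> fin_cases j <;> simp [sdeg]

lemma oS (c : Fin m → ℝ) (i0 : Fin m) (k j : Fin 3) :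
    (fun x : V => Smat (c i0) (x.1 i0) (x.2 i0) k j)
      =O[nhds 0] fun x : V => ‖x‖ ^ sdeg k j := by
  have hp := ofst (m := m) i0
  have hq := osnd (m := m) i0
  have hpp : (fun x : V => x.1 i0 * x.1 i0) =O[nhds 0] fun x : V => ‖x‖ ^ 0 :=
    omono (omul hp hp) (by norm_num)
  have hqq : (fun x : V => x.2 i0 * x.2 i0) =O[nhds 0] fun x : V => ‖x‖ ^ 0 :=
    omono (omul hq hq) (by norm_num)
  have hpq : (fun x : V => x.1 i0 * x.2 i0) =O[nhds 0] fun x : V => ‖x‖ ^ 0 :=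
    omono (omul hp hq) (by norm_num)
  have s00 : (fun x : V => Smat (c i0) (x.1 i0) (x.2 i0) 0 0)
      =O[nhds 0] fun x : V => ‖x‖ ^ 0 := by
    have e : (fun x : V => Smat (c i0) (x.1 i0) (x.2 i0) 0 0)
        = fun x : V => 1 - c i0 ^ 2 / 2 * (x.2 i0 * x.2 i0) := by
      funext x
      simp only [Smat, Matrix.cons_val', Matrix.cons_val_zero, Matrix.cons_val_one,
        Matrix.head_cons, Matrix.empty_val', Matrix.cons_val_fin_one, Matrix.head_fin_const,
        Matrix.of_apply, Matrix.cons_val_two, Matrix.tail_cons]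
      ring
    rw [e]; exact (oconst 1).sub (hqq.const_mul_left _)
  have s01 : (fun x : V => Smat (c i0) (x.1 i0) (x.2 i0) 0 1)
      =O[nhds 0] fun x : V => ‖x‖ ^ 0 := by
    have e : (fun x : V => Smat (c i0) (x.1 i0) (x.2 i0) 0 1)
        = fun x : V => -(c i0 ^ 2) / 2 * (x.1 i0 * x.2 i0) := by
      funext x
      simp only [Smat, Matrix.cons_val', Matrix.cons_val_zero, Matrix.cons_val_one,
        Matrix.head_cons, Matrix.empty_val', Matrix.cons_val_fin_one, Matrix.head_fin_const,
        Matrix.of_apply, Matrix.cons_val_two, Matrix.tail_cons]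
      ring
    rw [e]; exact hpq.const_mul_left _
  have s02 : (fun x : V => Smat (c i0) (x.1 i0) (x.2 i0) 0 2)
      =O[nhds 0] fun x : V => ‖x‖ ^ 1 := by
    have e : (fun x : V => Smat (c i0) (x.1 i0) (x.2 i0) 0 2)
        = fun x : V => -(c i0) * x.2 i0 := by
      funext x
      simp only [Smat, Matrix.cons_val', Matrix.cons_val_zero, Matrix.cons_val_one,
        Matrix.head_cons, Matrix.empty_val', Matrix.cons_val_fin_one, Matrix.head_fin_const,
        Matrix.of_apply, Matrix.cons_val_two, Matrix.tail_cons]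
      ring
    rw [e]; exact hq.const_mul_left _
  have s10 : (fun x : V => Smat (c i0) (x.1 i0) (x.2 i0) 1 0)
      =O[nhds 0] fun x : V => ‖x‖ ^ 0 := by
    have e : (fun x : V => Smat (c i0) (x.1 i0) (x.2 i0) 1 0)
        = fun x : V => -(c i0 ^ 2) / 2 * (x.1 i0 * x.2 i0) := by
      funext x
      simp only [Smat, Matrix.cons_val', Matrix.cons_val_zero, Matrix.cons_val_one,
        Matrix.head_cons, Matrix.empty_val', Matrix.cons_val_fin_one, Matrix.head_fin_const,
        Matrix.of_apply, Matrix.cons_val_two, Matrix.tail_cons]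
      ring
    rw [e]; exact hpq.const_mul_left _
  have s11 : (fun x : V => Smat (c i0) (x.1 i0) (x.2 i0) 1 1)
      =O[nhds 0] fun x : V => ‖x‖ ^ 0 := by
    have e : (fun x : V => Smat (c i0) (x.1 i0) (x.2 i0) 1 1)
        = fun x : V => 1 - c i0 ^ 2 / 2 * (x.1 i0 * x.1 i0) := by
      funext x
      simp only [Smat, Matrix.cons_val', Matrix.cons_val_zero, Matrix.cons_val_one,
        Matrix.head_cons, Matrix.empty_val', Matrix.cons_val_fin_one, Matrix.head_fin_const,
        Matrix.of_apply, Matrix.cons_val_two, Matrix.tail_cons]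
      ring
    rw [e]; exact (oconst 1).sub (hpp.const_mul_left _)
  have s12 : (fun x : V => Smat (c i0) (x.1 i0) (x.2 i0) 1 2)
      =O[nhds 0] fun x : V => ‖x‖ ^ 1 := by
    have e : (fun x : V => Smat (c i0) (x.1 i0) (x.2 i0) 1 2)
        = fun x : V => -(c i0) * x.1 i0 := by
      funext x
      simp only [Smat, Matrix.cons_val', Matrix.cons_val_zero, Matrix.cons_val_one,
        Matrix.head_cons, Matrix.empty_val', Matrix.cons_val_fin_one, Matrix.head_fin_const,
        Matrix.of_apply, Matrix.cons_val_two, Matrix.tail_cons]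
      ring
    rw [e]; exact hp.const_mul_left _
  have s20 : (fun x : V => Smat (c i0) (x.1 i0) (x.2 i0) 2 0)
      =O[nhds 0] fun x : V => ‖x‖ ^ 1 := by
    have e : (fun x : V => Smat (c i0) (x.1 i0) (x.2 i0) 2 0)
        = fun x : V => c i0 * x.2 i0 := by
      funext x
      simp only [Smat, Matrix.cons_val', Matrix.cons_val_zero, Matrix.cons_val_one,
        Matrix.head_cons, Matrix.empty_val', Matrix.cons_val_fin_one, Matrix.head_fin_const,
        Matrix.of_apply, Matrix.cons_val_two, Matrix.tail_cons]
    rw [e]; exact hq.const_mul_left _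
  have s21 : (fun x : V => Smat (c i0) (x.1 i0) (x.2 i0) 2 1)
      =O[nhds 0] fun x : V => ‖x‖ ^ 1 := by
    have e : (fun x : V => Smat (c i0) (x.1 i0) (x.2 i0) 2 1)
        = fun x : V => c i0 * x.1 i0 := by
      funext x
      simp only [Smat, Matrix.cons_val', Matrix.cons_val_zero, Matrix.cons_val_one,
        Matrix.head_cons, Matrix.empty_val', Matrix.cons_val_fin_one, Matrix.head_fin_const,
        Matrix.of_apply, Matrix.cons_val_two, Matrix.tail_cons]
    rw [e]; exact hp.const_mul_left _
  have s22 : (fun x : V => Smat (c i0) (x.1 i0) (x.2 i0) 2 2)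
      =O[nhds 0] fun x : V => ‖x‖ ^ 0 := by
    have e : (fun x : V => Smat (c i0) (x.1 i0) (x.2 i0) 2 2)
        = fun x : V => 1 - (c i0 ^ 2 / 2 * (x.1 i0 * x.1 i0)
            + c i0 ^ 2 / 2 * (x.2 i0 * x.2 i0)) := by
      funext x
      simp only [Smat, Matrix.cons_val', Matrix.cons_val_zero, Matrix.cons_val_one,
        Matrix.head_cons, Matrix.empty_val', Matrix.cons_val_fin_one, Matrix.head_fin_const,
        Matrix.of_apply, Matrix.cons_val_two, Matrix.tail_cons]
      ring
    rw [e]; exact (oconst 1).sub ((hpp.const_mul_left _).add (hqq.const_mul_left _))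
  fin_cases k <;> fin_cases j
  exacts [s00, s01, s02, s10, s11, s12, s20, s21, s22]

lemma key (c : Fin m → ℝ) : ∀ n, n ≤ m → ∀ (i : Fin 2) (j : Fin 3),
    (fun x : V => Prodn c n x i.castSucc j - Mf c n x i.castSucc j)
      =O[nhds 0] fun x : V => ‖x‖ ^ (![4, 4, 3] j : ℕ) := by
  intro n
  induction n with
  | zero =>
    intro _ i j
    have e : (fun x : V => Prodn c 0 x i.castSucc j - Mf c 0 x i.castSucc j)
        = fun _ => (0 : ℝ) := by
      funext x
      have hP : Pf c 0 x = 0 := by simp [Pf]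
      have hQ : Qf c 0 x = 0 := by simp [Qf]
      have hD : Df c 0 x = 0 := by simp [Df]
      have hM : Mf c 0 x = 1 := by
        unfold Mf
        rw [hP, hQ, hD, Matrix.one_fin_three]
        norm_num
      rw [Prodn_zero, hM, sub_self]
    rw [e]
    exact isBigO_zero _ _
  | succ n IH =>
    intro hn i j
    have h : n < m := hn
    have hn' : n ≤ m := h.le
    have hsplit : (fun x : V => Prodn c (n + 1) x i.castSucc j - Mf c (n + 1) x i.castSucc j)
        = fun x : V =>
            (∑ k : Fin 3, (Prodn c n x i.castSucc k - Mf c n x i.castSucc k)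
                * Smat (c ⟨n, h⟩) (x.1 ⟨n, h⟩) (x.2 ⟨n, h⟩) k j)
            + ((∑ k : Fin 3, Mf c n x i.castSucc k * Smat (c ⟨n, h⟩) (x.1 ⟨n, h⟩) (x.2 ⟨n, h⟩) k j)
                - Mf c (n + 1) x i.castSucc j) := by
      funext x
      rw [Prodn_succ c n h x, Matrix.mul_apply]
      simp only [Fin.sum_univ_three]
      ring
    rw [hsplit]
    refine Asymptotics.IsBigO.add ?_ ?_
    · refine Asymptotics.IsBigO.fun_sum fun k _ => ?_
      exact omono (omul (IH hn' i k) (oS c ⟨n, h⟩ k j)) (deg_le k j)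
    · -- algebraic piece
      have hP := oPf c n
      have hQ := oQf c n
      have hD := oDf c n
      have hp := ofst (m := m) ⟨n, h⟩
      have hq := osnd (m := m) ⟨n, h⟩
      have hPQmD : (fun x : V => Pf c n x * Qf c n x - Df c n x)
          =O[nhds 0] fun x : V => ‖x‖ ^ 2 := by
        refine Asymptotics.IsBigO.sub ?_ hD
        simpa using omul hP hQ
      have hPQpD : (fun x : V => Pf c n x * Qf c n x + Df c n x)
          =O[nhds 0] fun x : V => ‖x‖ ^ 2 := by
        refine Asymptotics.IsBigO.add ?_ hD
        simpa using omul hP hQ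
      have hQQ : (fun x : V => Qf c n x * Qf c n x) =O[nhds 0] fun x : V => ‖x‖ ^ 2 := by
        simpa using omul hQ hQ
      have hPP : (fun x : V => Pf c n x * Pf c n x) =O[nhds 0] fun x : V => ‖x‖ ^ 2 := by
        simpa using omul hP hP
      have a00 : (fun x : V =>
            (∑ k : Fin 3, Mf c n x 0 k * Smat (c ⟨n, h⟩) (x.1 ⟨n, h⟩) (x.2 ⟨n, h⟩) k 0)
              - Mf c (n + 1) x 0 0)
          =O[nhds 0] fun x : V => ‖x‖ ^ 4 := by
        have e : (fun x : V =>
              (∑ k : Fin 3, Mf c n x 0 k * Smat (c ⟨n, h⟩) (x.1 ⟨n, h⟩) (x.2 ⟨n, h⟩) k 0)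
                - Mf c (n + 1) x 0 0)
            = fun x : V => c ⟨n, h⟩ ^ 2 / 4 *
                ((x.2 ⟨n, h⟩ * x.2 ⟨n, h⟩) * (Qf c n x * Qf c n x)
                  + (x.1 ⟨n, h⟩ * x.2 ⟨n, h⟩) * (Pf c n x * Qf c n x - Df c n x)) := by
          funext x
          simp only [Fin.sum_univ_three, Mf, Smat, Matrix.cons_val', Matrix.cons_val_zero,
            Matrix.cons_val_one, Matrix.head_cons, Matrix.empty_val', Matrix.cons_val_fin_one,
            Matrix.head_fin_const, Matrix.of_apply, Matrix.cons_val_two, Matrix.tail_cons]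
          simp only [Pf_succ c n h x, Qf_succ c n h x, Df_succ c n h x]
          ring
        rw [e]
        refine Asymptotics.IsBigO.const_mul_left ?_ _
        exact (omono (omul (omul hq hq) hQQ) (by norm_num)).add
          (omono (omul (omul hp hq) hPQmD) (by norm_num))
      have a01 : (fun x : V =>
            (∑ k : Fin 3, Mf c n x 0 k * Smat (c ⟨n, h⟩) (x.1 ⟨n, h⟩) (x.2 ⟨n, h⟩) k 1)
              - Mf c (n + 1) x 0 1)
          =O[nhds 0] fun x : V => ‖x‖ ^ 4 := by
        have e : (fun x : V =>
              (∑ k : Fin 3, Mf c n x 0 k * Smat (c ⟨n, h⟩) (x.1 ⟨n, h⟩) (x.2 ⟨n, h⟩) k 1)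
                - Mf c (n + 1) x 0 1)
            = fun x : V => c ⟨n, h⟩ ^ 2 / 4 *
                ((x.1 ⟨n, h⟩ * x.2 ⟨n, h⟩) * (Qf c n x * Qf c n x)
                  + (x.1 ⟨n, h⟩ * x.1 ⟨n, h⟩) * (Pf c n x * Qf c n x - Df c n x)) := by
          funext x
          simp only [Fin.sum_univ_three, Mf, Smat, Matrix.cons_val', Matrix.cons_val_zero,
            Matrix.cons_val_one, Matrix.head_cons, Matrix.empty_val', Matrix.cons_val_fin_one,
            Matrix.head_fin_const, Matrix.of_apply, Matrix.cons_val_two, Matrix.tail_cons]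
          simp only [Pf_succ c n h x, Qf_succ c n h x, Df_succ c n h x]
          ring
        rw [e]
        refine Asymptotics.IsBigO.const_mul_left ?_ _
        exact (omono (omul (omul hp hq) hQQ) (by norm_num)).add
          (omono (omul (omul hp hp) hPQmD) (by norm_num))
      have a02 : (fun x : V =>
            (∑ k : Fin 3, Mf c n x 0 k * Smat (c ⟨n, h⟩) (x.1 ⟨n, h⟩) (x.2 ⟨n, h⟩) k 2)
              - Mf c (n + 1) x 0 2)
          =O[nhds 0] fun x : V => ‖x‖ ^ 3 := by
        have e : (fun x : V =>
              (∑ k : Fin 3, Mf c n x 0 k * Smat (c ⟨n, h⟩) (x.1 ⟨n, h⟩) (x.2 ⟨n, h⟩) k 2)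
                - Mf c (n + 1) x 0 2)
            = fun x : V => c ⟨n, h⟩ / 2 *
                ((c ⟨n, h⟩ * (x.2 ⟨n, h⟩ * x.2 ⟨n, h⟩ + x.1 ⟨n, h⟩ * x.1 ⟨n, h⟩)) * Qf c n x
                  + x.2 ⟨n, h⟩ * (Qf c n x * Qf c n x)
                  + x.1 ⟨n, h⟩ * (Pf c n x * Qf c n x - Df c n x)) := by
          funext x
          simp only [Fin.sum_univ_three, Mf, Smat, Matrix.cons_val', Matrix.cons_val_zero,
            Matrix.cons_val_one, Matrix.head_cons, Matrix.empty_val', Matrix.cons_val_fin_one,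
            Matrix.head_fin_const, Matrix.of_apply, Matrix.cons_val_two, Matrix.tail_cons]
          simp only [Pf_succ c n h x, Qf_succ c n h x, Df_succ c n h x]
          ring
        rw [e]
        refine Asymptotics.IsBigO.const_mul_left ?_ _
        refine Asymptotics.IsBigO.add (Asymptotics.IsBigO.add ?_ ?_) ?_
        · exact omono (omul (((omul hq hq).add (omul hp hp)).const_mul_left (c ⟨n, h⟩)) hQ)
            (by norm_num)
        · exact omono (omul hq hQQ) (by norm_num)
        · exact omono (omul hp hPQmD) (by norm_num)
      have a10 : (fun x : V =>
            (∑ k : Fin 3, Mf c n x 1 k * Smat (c ⟨n, h⟩) (x.1 ⟨n, h⟩) (x.2 ⟨n, h⟩) k 0)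
              - Mf c (n + 1) x 1 0)
          =O[nhds 0] fun x : V => ‖x‖ ^ 4 := by
        have e : (fun x : V =>
              (∑ k : Fin 3, Mf c n x 1 k * Smat (c ⟨n, h⟩) (x.1 ⟨n, h⟩) (x.2 ⟨n, h⟩) k 0)
                - Mf c (n + 1) x 1 0)
            = fun x : V => c ⟨n, h⟩ ^ 2 / 4 *
                ((x.2 ⟨n, h⟩ * x.2 ⟨n, h⟩) * (Pf c n x * Qf c n x + Df c n x)
                  + (x.1 ⟨n, h⟩ * x.2 ⟨n, h⟩) * (Pf c n x * Pf c n x)) := by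
          funext x
          simp only [Fin.sum_univ_three, Mf, Smat, Matrix.cons_val', Matrix.cons_val_zero,
            Matrix.cons_val_one, Matrix.head_cons, Matrix.empty_val', Matrix.cons_val_fin_one,
            Matrix.head_fin_const, Matrix.of_apply, Matrix.cons_val_two, Matrix.tail_cons]
          simp only [Pf_succ c n h x, Qf_succ c n h x, Df_succ c n h x]
          ring
        rw [e]
        refine Asymptotics.IsBigO.const_mul_left ?_ _
        exact (omono (omul (omul hq hq) hPQpD) (by norm_num)).add
          (omono (omul (omul hp hq) hPP) (by norm_num))
      have a11 : (fun x : V =>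
            (∑ k : Fin 3, Mf c n x 1 k * Smat (c ⟨n, h⟩) (x.1 ⟨n, h⟩) (x.2 ⟨n, h⟩) k 1)
              - Mf c (n + 1) x 1 1)
          =O[nhds 0] fun x : V => ‖x‖ ^ 4 := by
        have e : (fun x : V =>
              (∑ k : Fin 3, Mf c n x 1 k * Smat (c ⟨n, h⟩) (x.1 ⟨n, h⟩) (x.2 ⟨n, h⟩) k 1)
                - Mf c (n + 1) x 1 1)
            = fun x : V => c ⟨n, h⟩ ^ 2 / 4 *
                ((x.1 ⟨n, h⟩ * x.2 ⟨n, h⟩) * (Pf c n x * Qf c n x + Df c n x)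
                  + (x.1 ⟨n, h⟩ * x.1 ⟨n, h⟩) * (Pf c n x * Pf c n x)) := by
          funext x
          simp only [Fin.sum_univ_three, Mf, Smat, Matrix.cons_val', Matrix.cons_val_zero,
            Matrix.cons_val_one, Matrix.head_cons, Matrix.empty_val', Matrix.cons_val_fin_one,
            Matrix.head_fin_const, Matrix.of_apply, Matrix.cons_val_two, Matrix.tail_cons]
          simp only [Pf_succ c n h x, Qf_succ c n h x, Df_succ c n h x]
          ring
        rw [e]
        refine Asymptotics.IsBigO.const_mul_left ?_ _
        exact (omono (omul (omul hp hq) hPQpD) (by norm_num)).add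
          (omono (omul (omul hp hp) hPP) (by norm_num))
      have a12 : (fun x : V =>
            (∑ k : Fin 3, Mf c n x 1 k * Smat (c ⟨n, h⟩) (x.1 ⟨n, h⟩) (x.2 ⟨n, h⟩) k 2)
              - Mf c (n + 1) x 1 2)
          =O[nhds 0] fun x : V => ‖x‖ ^ 3 := by
        have e : (fun x : V =>
              (∑ k : Fin 3, Mf c n x 1 k * Smat (c ⟨n, h⟩) (x.1 ⟨n, h⟩) (x.2 ⟨n, h⟩) k 2)
                - Mf c (n + 1) x 1 2)
            = fun x : V => c ⟨n, h⟩ / 2 *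
                ((c ⟨n, h⟩ * (x.2 ⟨n, h⟩ * x.2 ⟨n, h⟩ + x.1 ⟨n, h⟩ * x.1 ⟨n, h⟩)) * Pf c n x
                  + x.2 ⟨n, h⟩ * (Pf c n x * Qf c n x + Df c n x)
                  + x.1 ⟨n, h⟩ * (Pf c n x * Pf c n x)) := by
          funext x
          simp only [Fin.sum_univ_three, Mf, Smat, Matrix.cons_val', Matrix.cons_val_zero,
            Matrix.cons_val_one, Matrix.head_cons, Matrix.empty_val', Matrix.cons_val_fin_one,
            Matrix.head_fin_const, Matrix.of_apply, Matrix.cons_val_two, Matrix.tail_cons]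
          simp only [Pf_succ c n h x, Qf_succ c n h x, Df_succ c n h x]
          ring
        rw [e]
        refine Asymptotics.IsBigO.const_mul_left ?_ _
        refine Asymptotics.IsBigO.add (Asymptotics.IsBigO.add ?_ ?_) ?_
        · exact omono (omul (((omul hq hq).add (omul hp hp)).const_mul_left (c ⟨n, h⟩)) hP)
            (by norm_num)
        · exact omono (omul hq hPQpD) (by norm_num)
        · exact omono (omul hp hPP) (by norm_num)
      fin_cases i <;> fin_cases j
      exacts [a00, a01, a02, a10, a11, a12]

theorem stmt_15 (m : ℕ) (c : Fin m → ℝ) (i j : Fin 2) :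
    (fun x : (Fin m → ℝ) × (Fin m → ℝ) =>
        (List.ofFn (fun l : Fin m => Smat (c l) (x.1 l) (x.2 l))).prod i.castSucc j.castSucc
          - !![1 - (∑ l, c l * x.2 l) ^ 2 / 2,
               -((∑ l, c l * x.1 l) * (∑ l, c l * x.2 l)
                  - ∑ a : Fin m, ∑ b ∈ Finset.Ioi a,
                      c a * c b * (x.1 a * x.2 b - x.1 b * x.2 a)) / 2;
               -((∑ l, c l * x.1 l) * (∑ l, c l * x.2 l)
                  + ∑ a : Fin m, ∑ b ∈ Finset.Ioi a,
                      c a * c b * (x.1 a * x.2 b - x.1 b * x.2 a)) / 2,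
               1 - (∑ l, c l * x.1 l) ^ 2 / 2] i j)
      =O[nhds 0] fun x : (Fin m → ℝ) × (Fin m → ℝ) => ‖x‖ ^ 4 := by
  have hProd : ∀ x : (Fin m → ℝ) × (Fin m → ℝ),
      (List.ofFn fun l : Fin m => Smat (c l) (x.1 l) (x.2 l)).prod = Prodn c m x := by
    intro x; rw [Prodn, List.take_of_length_le (by simp)]
  have hPm : ∀ x : (Fin m → ℝ) × (Fin m → ℝ), Pf c m x = ∑ l, c l * x.1 l := by
    intro x; exact Finset.sum_congr rfl fun l _ => if_pos l.isLt
  have hQm : ∀ x : (Fin m → ℝ) × (Fin m → ℝ), Qf c m x = ∑ l, c l * x.2 l := by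
    intro x; exact Finset.sum_congr rfl fun l _ => if_pos l.isLt
  have hDm : ∀ x : (Fin m → ℝ) × (Fin m → ℝ), Df c m x
      = ∑ a : Fin m, ∑ b ∈ Finset.Ioi a, c a * c b * (x.1 a * x.2 b - x.1 b * x.2 a) := by
    intro x
    exact Finset.sum_congr rfl fun a _ => Finset.sum_congr rfl fun b _ => if_pos b.isLt
  have hkey := key c m le_rfl i (Fin.castSucc j)
  have e : (fun x : (Fin m → ℝ) × (Fin m → ℝ) =>
        (List.ofFn (fun l : Fin m => Smat (c l) (x.1 l) (x.2 l))).prod i.castSucc j.castSucc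
          - !![1 - (∑ l, c l * x.2 l) ^ 2 / 2,
               -((∑ l, c l * x.1 l) * (∑ l, c l * x.2 l)
                  - ∑ a : Fin m, ∑ b ∈ Finset.Ioi a,
                      c a * c b * (x.1 a * x.2 b - x.1 b * x.2 a)) / 2;
               -((∑ l, c l * x.1 l) * (∑ l, c l * x.2 l)
                  + ∑ a : Fin m, ∑ b ∈ Finset.Ioi a,
                      c a * c b * (x.1 a * x.2 b - x.1 b * x.2 a)) / 2,
               1 - (∑ l, c l * x.1 l) ^ 2 / 2] i j)
      = fun x => Prodn c m x i.castSucc (Fin.castSucc j)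
          - Mf c m x i.castSucc (Fin.castSucc j) := by
    funext x
    rw [hProd x]
    congr 1
    fin_cases i <;> fin_cases j <;>
      simp only [Mf, hPm x, hQm x, hDm x, Matrix.cons_val', Matrix.cons_val_zero,
        Matrix.cons_val_one, Matrix.head_cons, Matrix.empty_val', Matrix.cons_val_fin_one,
        Matrix.head_fin_const, Matrix.of_apply, Matrix.cons_val_two, Matrix.tail_cons,
        Fin.castSucc, Fin.castAdd, Fin.castLE, Fin.isValue, Fin.mk_zero, Fin.mk_one]
  rw [e]
  have hexp : (![4, 4, 3] : Fin 3 → ℕ) (Fin.castSucc j) = 4 := by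
    fin_cases j <;> simp
  rw [← hexp]
  exact hkey
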